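/- arXiv:1803.04666 — 2 statements merged into one kernel-verified Lean document; each statement's English description precedes it below -/
import Mathlib

section
/- For every ε > 0 there is a constant c_ε > 0 such that for every α in the open unit disk with α ≠ 0, there is an arc A ⊆ 𝕋 centered at α/|α| with ∫_A |b_α'(ζ)| |dζ| > 2π − ε and with arc length |A| ≤ c_ε·(1 − |α|), where b_α(z) = (z − α)/(1 − conj(α) z). -/
open Real

lemma denom_pos {r : ℝ} (hr0 : 0 ≤ r) (hr1 : r < 1) (θ : ℝ) :
    0 < 1 - 2*r*Real.cos θ + r^2 := by
  nlinarith [Real.cos_le_one θ, Real.neg_one_le_cos θ]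

lemma poisson_hasDerivAt {r : ℝ} (hr0 : 0 ≤ r) (hr1 : r < 1) {θ : ℝ}
    (h1 : -π < θ) (h2 : θ < π) :
    HasDerivAt (fun t => 2 * arctan ((1+r)/(1-r) * tan (t/2)))
      ((1 - r^2) / (1 - 2*r*Real.cos θ + r^2)) θ := by
  have hcpos : 0 < Real.cos (θ/2) :=
    Real.cos_pos_of_mem_Ioo (by constructor <;> [linarith; linarith])
  have hc : Real.cos (θ/2) ≠ 0 := hcpos.ne'
  have htan : HasDerivAt (fun t => Real.tan (t/2)) (1 / Real.cos (θ/2)^2 * (2:ℝ)⁻¹) θ := by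
    have := (Real.hasDerivAt_tan hc).comp θ ((hasDerivAt_id θ).div_const 2)
    rw [one_div]; exact this.congr_deriv (by simp)
  set K := (1+r)/(1-r) with hK
  have h := (((Real.hasDerivAt_arctan (K * Real.tan (θ/2))).comp θ
    (htan.const_mul K)).const_mul 2)
  refine h.congr_deriv ?_
  symm
  have hden := (denom_pos hr0 hr1 θ).ne'
  have hr1' : (1:ℝ) - r ≠ 0 := by linarith
  have hKpos : 0 < K := div_pos (by linarith) (by linarith)
  have hcos : Real.cos θ = 2 * Real.cos (θ/2)^2 - 1 := by
    have := Real.cos_sq (θ/2)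
    rw [show 2 * (θ/2) = θ by ring] at this
    linarith
  have hsin : Real.sin (θ/2)^2 = 1 - Real.cos (θ/2)^2 := by
    have := Real.sin_sq_add_cos_sq (θ/2); linarith
  rw [Real.tan_eq_sin_div_cos]
  set c := Real.cos (θ/2)
  set s := Real.sin (θ/2)
  have hc2 : c^2 ≠ 0 := pow_ne_zero 2 hc
  have h1 : 1 + (K * (s / c))^2 = (c^2 + K^2*(1 - c^2))/c^2 := by
    field_simp
    linear_combination K^2 * hsin
  have h2pos : 0 < c^2 + K^2*(1 - c^2) := by nlinarith [sq_nonneg s, sq_nonneg c]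
  rw [h1, hcos]
  have hden' : 1 - 2*r*(2*c^2-1) + r^2 ≠ 0 := by rw [← hcos]; exact hden
  have hX : 2 * (1 / ((c^2 + K^2*(1 - c^2))/c^2) * (K * (1 / c ^ 2 * 2⁻¹)))
      = K / (c^2 + K^2*(1 - c^2)) := by
    field_simp
  rw [hX, div_eq_div_iff hden' h2pos.ne', hK]
  field_simp
  ring

lemma poisson_integral {r : ℝ} (hr0 : 0 ≤ r) (hr1 : r < 1) {δ : ℝ} (hδ0 : 0 < δ) (hδπ : δ < π) :
    ∫ θ in (-δ)..δ, (1 - r^2) / (1 - 2*r*Real.cos θ + r^2)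
      = 4 * arctan ((1+r)/(1-r) * tan (δ/2)) := by
  have hcont : Continuous fun θ : ℝ => (1 - r^2) / (1 - 2*r*Real.cos θ + r^2) :=
    continuous_const.div (by fun_prop) (fun θ => (denom_pos hr0 hr1 θ).ne')
  have key := intervalIntegral.integral_eq_sub_of_hasDerivAt (a := -δ) (b := δ)
    (f := fun t => 2 * arctan ((1+r)/(1-r) * tan (t/2)))
    (f' := fun θ => (1 - r^2)/(1 - 2*r*Real.cos θ + r^2))
    (fun θ hθ => by
      rw [Set.uIcc_of_le (by linarith)] at hθ
      exact poisson_hasDerivAt hr0 hr1 (by linarith [hθ.1]) (by linarith [hθ.2]))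
    (hcont.intervalIntegrable _ _)
  rw [key]
  rw [show (-δ)/2 = -(δ/2) by ring, Real.tan_neg, mul_neg, Real.arctan_neg]
  ring

lemma blaschke_deriv_abs {α : ℂ} (hα : ‖α‖ < 1) (hα0 : α ≠ 0) (θ : ℝ) :
    ‖deriv (fun z => (z - α) / (1 - (starRingEnd ℂ) α * z))
        ((α / ((‖α‖ : ℝ) : ℂ)) * Complex.exp (θ * Complex.I))‖
      = (1 - ‖α‖^2) / (1 - 2*‖α‖*Real.cos θ + ‖α‖^2) := by
  set r : ℝ := ‖α‖ with hr
  have hrpos : 0 < r := norm_pos_iff.mpr hα0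
  have hrC : (r : ℂ) ≠ 0 := by exact_mod_cast hrpos.ne'
  set ζ : ℂ := (α / (r : ℂ)) * Complex.exp (θ * Complex.I) with hζ
  have hconj : (starRingEnd ℂ) α * ζ = (r : ℂ) * Complex.exp (θ * Complex.I) := by
    have h1 : (starRingEnd ℂ) α * α = ((r : ℂ))^2 := by
      rw [mul_comm, Complex.mul_conj, Complex.normSq_eq_norm_sq]
      push_cast
      rfl
    rw [hζ]
    rw [mul_comm ((starRingEnd ℂ) α) α] at h1
    field_simp [mul_comm, mul_assoc, mul_left_comm]
    linear_combination h1
  have habs_e : ‖Complex.exp (θ * Complex.I)‖ = 1 := by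
    rw [show (θ : ℂ) * Complex.I = (θ:ℝ) * Complex.I by norm_num]
    exact Complex.norm_exp_ofReal_mul_I θ
  have hne : 1 - (starRingEnd ℂ) α * ζ ≠ 0 := by
    intro h
    have : (starRingEnd ℂ) α * ζ = 1 := by linear_combination -h
    have h2 : ‖(starRingEnd ℂ) α * ζ‖ = 1 := by rw [this]; simp
    rw [hconj, norm_mul, habs_e, mul_one, Complex.norm_real, Real.norm_of_nonneg hrpos.le] at h2
    exact absurd h2 hα.ne
  have hd : HasDerivAt (fun z => (z - α) / (1 - (starRingEnd ℂ) α * z))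
      ((1 - (starRingEnd ℂ) α * α) / (1 - (starRingEnd ℂ) α * ζ)^2) ζ := by
    have h1 : HasDerivAt (fun z : ℂ => z - α) 1 ζ := (hasDerivAt_id ζ).sub_const α
    have h2 : HasDerivAt (fun z : ℂ => 1 - (starRingEnd ℂ) α * z) (-((starRingEnd ℂ) α)) ζ := by
      simpa using (((hasDerivAt_id ζ).const_mul ((starRingEnd ℂ) α)).const_sub 1)
    have := h1.div h2 hne
    refine this.congr_deriv ?_
    ring
  rw [hd.deriv]
  have hnum : 1 - (starRingEnd ℂ) α * α = ((1 - r^2 : ℝ) : ℂ) := by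
    rw [mul_comm, Complex.mul_conj, Complex.normSq_eq_norm_sq]
    push_cast
    rfl
  have hden : ‖(1 - (starRingEnd ℂ) α * ζ)^2‖
      = 1 - 2*r*Real.cos θ + r^2 := by
    rw [norm_pow, Complex.sq_norm, hconj, Complex.exp_mul_I]
    rw [show Complex.cos θ = ((Real.cos θ : ℝ) : ℂ) by rw [Complex.ofReal_cos],
      show Complex.sin θ = ((Real.sin θ : ℝ) : ℂ) by rw [Complex.ofReal_sin]]
    simp [Complex.normSq_apply, Complex.cos_ofReal_re, Complex.sin_ofReal_re]
    nlinarith [Real.sin_sq_add_cos_sq θ]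
  rw [norm_div, hnum, hden, Complex.norm_real,
    Real.norm_of_nonneg (by nlinarith : (0:ℝ) ≤ 1 - r^2)]

lemma arctan_gt_of_pos {x : ℝ} (hx : 0 < x) : π/2 - 1/x < Real.arctan x := by
  have h1 : Real.arctan x⁻¹ = π/2 - Real.arctan x := Real.arctan_inv_of_pos hx
  have hp : 0 < Real.arctan x⁻¹ := by
    rw [← Real.arctan_zero]
    exact Real.arctan_strictMono (by positivity)
  have h2 : Real.arctan x⁻¹ < x⁻¹ := by
    have := Real.lt_tan hp (Real.arctan_lt_pi_div_two x⁻¹)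
    rwa [Real.tan_arctan] at this
  rw [h1] at h2
  rw [one_div]
  linarith


open Complex

/-- For every `ε > 0` there is `c_ε > 0` so that for every `α` in the punctured open unit disk
there is an arc of `𝕋` centered at `α/|α|` (of angular half-width `δ`) whose movement under
`b_α` exceeds `2π - ε` and whose length `2δ` is at most `c_ε (1 - |α|)`. -/
theorem blaschke_concentration_arc :
    ∀ ε : ℝ, 0 < ε → ∃ c : ℝ, 0 < c ∧ ∀ α : ℂ, ‖α‖ < 1 → α ≠ 0 →
      ∃ δ : ℝ, 0 < δ ∧ δ ≤ Real.pi ∧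
        (2 * Real.pi - ε <
          ∫ θ in (-δ)..δ,
            ‖deriv (fun z => (z - α) / (1 - (starRingEnd ℂ) α * z))
              ((α / ((‖α‖ : ℝ) : ℂ)) * Complex.exp (θ * Complex.I))‖) ∧
        2 * δ ≤ c * (1 - ‖α‖) := by

  intro ε hε
  refine ⟨18/ε, by positivity, ?_⟩
  intro α hα hα0
  set r : ℝ := ‖α‖ with hr
  have hr0 : 0 ≤ r := norm_nonneg α
  have hr1 : r < 1 := hα
  have hrlt : 0 < 1 - r := by linarith
  have hπ := Real.pi_pos
  set m : ℝ := min (ε/4) (π/2) with hm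
  have hm0 : 0 < m := lt_min (by linarith) (by positivity)
  have hmπ : m ≤ π/2 := min_le_right _ _
  have hmε : m ≤ ε/4 := min_le_left _ _
  set δ₀ : ℝ := π - m with hδ₀
  have hδ₀pos : 0 < δ₀ := by simp only [hδ₀]; linarith
  set δ : ℝ := min δ₀ (9*(1-r)/ε) with hδdef
  have hδpos : 0 < δ := lt_min hδ₀pos (by positivity)
  have hδltπ : δ < π := lt_of_le_of_lt (min_le_left _ _) (by simp only [hδ₀]; linarith)
  have hδhalf : δ/2 < π/2 := by linarith
  set K : ℝ := (1+r)/(1-r) with hK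
  have hK1 : 1 ≤ K := by rw [hK, le_div_iff₀ hrlt]; linarith
  have htanlb : δ/2 < Real.tan (δ/2) := Real.lt_tan (by linarith) hδhalf
  have htanpos : 0 < Real.tan (δ/2) := lt_trans (by linarith) htanlb
  refine ⟨δ, hδpos, hδltπ.le, ?_, ?_⟩
  · have hint : (∫ θ in (-δ)..δ,
        ‖deriv (fun z => (z - α) / (1 - (starRingEnd ℂ) α * z))
          ((α / ((‖α‖ : ℝ) : ℂ)) * Complex.exp (θ * Complex.I))‖)
        = 4 * Real.arctan (K * Real.tan (δ/2)) := by
      rw [intervalIntegral.integral_congr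
        (g := fun θ => (1 - r^2)/(1 - 2*r*Real.cos θ + r^2))
        (fun θ _ => blaschke_deriv_abs hα hα0 θ)]
      exact poisson_integral hr0 hr1 hδpos hδltπ
    rw [hint]
    suffices h : π/2 - ε/4 < Real.arctan (K * Real.tan (δ/2)) by linarith
    rcases le_total δ₀ (9*(1-r)/ε) with hcase | hcase
    · have hδeq : δ = δ₀ := min_eq_left hcase
      have harc : Real.arctan (Real.tan (δ/2)) = δ/2 :=
        Real.arctan_tan (by linarith) hδhalf
      have hmono : Real.arctan (Real.tan (δ/2)) ≤ Real.arctan (K * Real.tan (δ/2)) :=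
        Real.arctan_strictMono.monotone (by nlinarith)
      have hδval : δ/2 = π/2 - m/2 := by rw [hδeq, hδ₀]; ring
      linarith
    · have hδeq : δ = 9*(1-r)/ε := min_eq_right hcase
      have hXlb : 9/(2*ε) ≤ K * Real.tan (δ/2) := by
        have h1 : 1/(1-r) ≤ K := by
          rw [hK, div_le_div_iff₀ hrlt hrlt]; nlinarith
        have h2 : δ/2 ≤ Real.tan (δ/2) := htanlb.le
        calc 9/(2*ε) = (1/(1-r)) * (δ/2) := by
              rw [hδeq]; field_simp
          _ ≤ K * Real.tan (δ/2) := by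
              apply mul_le_mul h1 h2 (by linarith) (by linarith)
      have hXpos : 0 < K * Real.tan (δ/2) := by positivity
      have harc := arctan_gt_of_pos hXpos
      have hinv : 1/(K * Real.tan (δ/2)) ≤ 2*ε/9 := by
        rw [div_le_div_iff₀ hXpos (by norm_num)]
        calc (1:ℝ) * 9 = 2*ε * (9/(2*ε)) := by field_simp
          _ ≤ 2*ε * (K * Real.tan (δ/2)) := by
              apply mul_le_mul_of_nonneg_left hXlb (by linarith)
      linarith
  · have h1 : δ ≤ 9*(1-r)/ε := min_le_right _ _
    have : 18/ε * (1-r) = 2 * (9*(1-r)/ε) := by field_simp; ring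
    rw [this]
    linarith
end

section
/- Let f be analytic in a neighborhood of 0 in ℂ with f(0) = 0 and f'(0) ≠ 0, and let g be analytic near 0 with g(0) = 0, g'(0) ≠ 0, f ≢ g. Suppose the smallest positive integer K with f^{(K)}(0) ≠ g^{(K)}(0) satisfies K ≥ 2, and let f^{-1}, g^{-1} denote the local analytic inverses at 0. Then K is also the smallest positive integer with (f^{-1})^{(K)}(0) ≠ (g^{-1})^{(K)}(0); i.e., order of contact of two analytic curves through a point, both with nonzero linear term, is preserved under inversion (swapping the roles of the two coordinates). -/
open Complex Filter Topology


private lemma iteratedDeriv_eq_coeff' {h : ℂ → ℂ} {p : FormalMultilinearSeries ℂ ℂ ℂ}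
    (hp : HasFPowerSeriesAt h p 0) (n : ℕ) :
    iteratedDeriv n h 0 = ((Nat.factorial n : ℕ) : ℂ) * p.coeff n := by
  obtain ⟨r, hr⟩ := hp
  have h1 := hr.factorial_smul (1 : ℂ) n
  rw [iteratedDeriv_eq_iteratedFDeriv, ← h1, FormalMultilinearSeries.coeff, nsmul_eq_mul]
  norm_num

private lemma order_eq_order' {h : ℂ → ℂ} (hh : AnalyticAt ℂ h 0)
    {p : FormalMultilinearSeries ℂ ℂ ℂ} (hp : HasFPowerSeriesAt h p 0) (hne : p ≠ 0) :
    analyticOrderAt h 0 = (p.order : ℕ∞) := by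
  rw [hh.analyticOrderAt_eq_natCast]
  exact ⟨_, ⟨_, hp.has_fpower_series_iterate_dslope_fslope p.order⟩,
    hp.iterate_dslope_fslope_ne_zero hne, Filter.Eventually.of_forall hp.eq_pow_order_mul_iterate_dslope⟩

private lemma order_eq_iff_coeff' {h : ℂ → ℂ} (hh : AnalyticAt ℂ h 0)
    {p : FormalMultilinearSeries ℂ ℂ ℂ} (hp : HasFPowerSeriesAt h p 0) (K : ℕ) :
    analyticOrderAt h 0 = (K : ℕ∞) ↔ ((∀ j, j < K → p.coeff j = 0) ∧ p.coeff K ≠ 0) := by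
  constructor
  · intro hK
    have hne : p ≠ 0 := by
      intro h0
      have h2 : ∀ᶠ z in 𝓝 (0 : ℂ), h z = 0 := hp.locally_zero_iff.mpr h0
      rw [← analyticOrderAt_eq_top] at h2
      rw [hK] at h2
      exact (ENat.coe_ne_top K) h2
    have h3 : (p.order : ℕ∞) = (K : ℕ∞) := (order_eq_order' hh hp hne).symm.trans hK
    have h4 : p.order = K := Nat.cast_inj.mp h3
    constructor
    · intro j hj
      rw [FormalMultilinearSeries.coeff_eq_zero]
      exact p.apply_eq_zero_of_lt_order (h4 ▸ hj)
    · rw [ne_eq, FormalMultilinearSeries.coeff_eq_zero]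
      exact h4 ▸ p.apply_order_ne_zero hne
  · rintro ⟨h1, h2⟩
    have hpK : p K ≠ 0 := fun h0 => h2 (FormalMultilinearSeries.coeff_eq_zero.mpr h0)
    have hne : p ≠ 0 := fun h0 => hpK (by simp [h0])
    have hordp : p.order = K := by
      rcases lt_trichotomy p.order K with hlt | he | hgt
      · exact absurd (FormalMultilinearSeries.coeff_eq_zero.mp (h1 _ hlt))
          (p.apply_order_ne_zero hne)
      · exact he
      · exact absurd (p.apply_eq_zero_of_lt_order hgt) hpK
    rw [order_eq_order' hh hp hne, hordp]

private lemma no_small_bound (a b : ℝ) (ha : 0 < a) (t : ℕ) (ht : 0 < t)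
    (hev : ∀ᶠ z in 𝓝[≠] (0:ℂ), a ≤ b * ‖z‖ ^ t) : False := by
  have hcont : Tendsto (fun z : ℂ => b * ‖z‖ ^ t) (𝓝[≠] 0) (𝓝 (b * ‖(0:ℂ)‖ ^ t)) := by
    apply Tendsto.mono_left _ nhdsWithin_le_nhds
    exact (continuous_const.mul ((continuous_norm).pow t)).tendsto 0
  have h0 : b * ‖(0:ℂ)‖ ^ t = 0 := by simp [zero_pow ht.ne']
  rw [h0] at hcont
  have hlt : ∀ᶠ z in 𝓝[≠] (0:ℂ), b * ‖z‖ ^ t < a :=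
    hcont.eventually (Filter.Tendsto.eventually_lt_const ha tendsto_id)
  obtain ⟨z, hz1, hz2⟩ := (hev.and hlt).exists
  linarith

private lemma order_eq_of_bounds' {h : ℂ → ℂ} (hh : AnalyticAt ℂ h 0) (K : ℕ)
    {c C : ℝ} (hc : 0 < c)
    (hb : ∀ᶠ z in 𝓝 (0:ℂ), c * ‖z‖ ^ K ≤ ‖h z‖ ∧ ‖h z‖ ≤ C * ‖z‖ ^ K) :
    analyticOrderAt h 0 = (K : ℕ∞) := by
  have hne_top : analyticOrderAt h 0 ≠ ⊤ := by
    intro htop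
    have h0 : ∀ᶠ z in 𝓝 (0:ℂ), h z = 0 := analyticOrderAt_eq_top.mp htop
    have h1 : ∀ᶠ z in 𝓝[≠] (0:ℂ), c * ‖z‖ ^ K ≤ 0 ∧ z ≠ 0 := by
      filter_upwards [((hb.and h0).filter_mono nhdsWithin_le_nhds),
        self_mem_nhdsWithin] with z hz hz'
      exact ⟨by simpa [hz.2] using hz.1.1, hz'⟩
    obtain ⟨z, hz1, hz2⟩ := h1.exists
    have hz0 : z ≠ 0 := hz2
    have : 0 < c * ‖z‖ ^ K := mul_pos hc (pow_pos (norm_pos_iff.mpr hz0) K)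
    linarith
  obtain ⟨m, hm⟩ := WithTop.ne_top_iff_exists.mp hne_top
  obtain ⟨u, hu, hu0, huev⟩ := (hh.analyticOrderAt_eq_natCast (n := m)).mp hm.symm
  have hu0' : 0 < ‖u 0‖ := norm_pos_iff.mpr hu0
  have hucont : ∀ᶠ z in 𝓝 (0:ℂ), dist (u z) (u 0) < ‖u 0‖ / 2 :=
    hu.continuousAt (Metric.ball_mem_nhds (u 0) (by positivity))
  have hmain : ∀ᶠ z in 𝓝[≠] (0:ℂ),
      (c * ‖z‖ ^ K ≤ ‖z‖ ^ m * (3 * ‖u 0‖ / 2)) ∧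
      (‖z‖ ^ m * (‖u 0‖ / 2) ≤ C * ‖z‖ ^ K) := by
    filter_upwards [(hb.and (huev.and hucont)).filter_mono nhdsWithin_le_nhds] with z hz
    obtain ⟨⟨hb1, hb2⟩, heq, hcl⟩ := hz
    rw [dist_eq_norm] at hcl
    have hnu1 : ‖u z‖ ≤ 3 * ‖u 0‖ / 2 := by
      have := norm_sub_norm_le (u z) (u 0)
      linarith [norm_sub_norm_le (u z) (u 0), hcl]
    have hnu2 : ‖u 0‖ / 2 ≤ ‖u z‖ := by
      have := norm_sub_norm_le (u 0) (u z)
      rw [norm_sub_rev] at hcl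
      linarith
    have hnorm : ‖h z‖ = ‖z‖ ^ m * ‖u z‖ := by
      rw [heq, norm_smul, norm_pow, sub_zero]
    constructor
    · calc c * ‖z‖ ^ K ≤ ‖h z‖ := hb1
        _ = ‖z‖ ^ m * ‖u z‖ := hnorm
        _ ≤ ‖z‖ ^ m * (3 * ‖u 0‖ / 2) := by
            apply mul_le_mul_of_nonneg_left hnu1 (by positivity)
    · calc ‖z‖ ^ m * (‖u 0‖ / 2) ≤ ‖z‖ ^ m * ‖u z‖ := by
            apply mul_le_mul_of_nonneg_left hnu2 (by positivity)
        _ = ‖h z‖ := hnorm.symm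
        _ ≤ C * ‖z‖ ^ K := hb2
  have hmK : m = K := by
    rcases lt_trichotomy m K with hlt | he | hgt
    · -- m < K : ‖u0‖/2 ≤ C ‖z‖^(K-m)
      exfalso
      apply no_small_bound (‖u 0‖ / 2) C (by positivity) (K - m) (by omega)
      filter_upwards [hmain, self_mem_nhdsWithin] with z hz hz'
      have hzpos : 0 < ‖z‖ := norm_pos_iff.mpr hz'
      have hKm : K = m + (K - m) := by omega
      have h2 := hz.2
      rw [hKm, pow_add] at h2
      have := (mul_le_mul_iff_right₀ (pow_pos hzpos m)).mp
        (by linarith [h2] : ‖z‖ ^ m * (‖u 0‖ / 2) ≤ ‖z‖ ^ m * (C * ‖z‖ ^ (K - m)))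
      linarith
    · exact he
    · -- K < m : c ≤ (3‖u0‖/2) ‖z‖^(m-K)
      exfalso
      apply no_small_bound c (3 * ‖u 0‖ / 2) hc (m - K) (by omega)
      filter_upwards [hmain, self_mem_nhdsWithin] with z hz hz'
      have hzpos : 0 < ‖z‖ := norm_pos_iff.mpr hz'
      have hmm : m = K + (m - K) := by omega
      have h2 := hz.1
      rw [hmm, pow_add] at h2
      have := (mul_le_mul_iff_right₀ (pow_pos hzpos K)).mp
        (by linarith [h2] : ‖z‖ ^ K * c ≤ ‖z‖ ^ K * (‖z‖ ^ (m - K) * (3 * ‖u 0‖ / 2)))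
      linarith [this]
  rw [← hm, hmK]
  rfl

/-- Order of contact of two analytic curves through `0` with nonvanishing linear term is
preserved under taking local inverses: if `K ≥ 2` is the smallest positive integer with
`f^{(K)}(0) ≠ g^{(K)}(0)`, the same holds for the local inverses `f⁻¹, g⁻¹` at `0`. -/
theorem contact_order_of_inverses (f g finv ginv : ℂ → ℂ)
    (hf : AnalyticAt ℂ f 0) (hg : AnalyticAt ℂ g 0)
    (hf0 : f 0 = 0) (hg0 : g 0 = 0)
    (hf' : deriv f 0 ≠ 0) (hg' : deriv g 0 ≠ 0)
    (K : ℕ) (hK : 2 ≤ K)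
    (hKd : iteratedDeriv K f 0 ≠ iteratedDeriv K g 0)
    (hmin : ∀ j : ℕ, 0 < j → j < K → iteratedDeriv j f 0 = iteratedDeriv j g 0)
    (hfinv : AnalyticAt ℂ finv 0) (hginv : AnalyticAt ℂ ginv 0)
    (hfinv0 : finv 0 = 0) (hginv0 : ginv 0 = 0)
    (hfr : ∀ᶠ w in nhds (0 : ℂ), f (finv w) = w)
    (hgr : ∀ᶠ w in nhds (0 : ℂ), g (ginv w) = w) :
    iteratedDeriv K finv 0 ≠ iteratedDeriv K ginv 0 ∧
      ∀ j : ℕ, 0 < j → j < K → iteratedDeriv j finv 0 = iteratedDeriv j ginv 0 := by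
  classical
  obtain ⟨p, hp⟩ := id hf
  obtain ⟨q, hq⟩ := id hg
  have hpq : HasFPowerSeriesAt (f - g) (p - q) 0 := hp.sub hq
  have hsubc : ∀ n, (p - q).coeff n = p.coeff n - q.coeff n := fun n => rfl
  -- order of f - g is K
  have horder1 : analyticOrderAt (f - g) 0 = (K : ℕ∞) := by
    rw [order_eq_iff_coeff' (hf.sub hg) hpq K]
    constructor
    · intro j hj
      rcases Nat.eq_zero_or_pos j with hj0 | hj0
      · subst hj0
        have h1 : p.coeff 0 = f 0 := hp.coeff_zero 1
        have h2 : q.coeff 0 = g 0 := hq.coeff_zero 1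
        rw [hsubc, h1, h2, hf0, hg0, sub_zero]
      · have h1 := iteratedDeriv_eq_coeff' hp j
        have h2 := iteratedDeriv_eq_coeff' hq j
        have h3 := hmin j hj0 hj
        rw [h1, h2] at h3
        have h4 : p.coeff j = q.coeff j :=
          mul_left_cancel₀ (by exact_mod_cast Nat.factorial_ne_zero j) h3
        rw [hsubc, h4, sub_self]
    · intro hco
      apply hKd
      have h1 := iteratedDeriv_eq_coeff' hp K
      have h2 := iteratedDeriv_eq_coeff' hq K
      rw [h1, h2]
      have : p.coeff K = q.coeff K := by
        have := hsubc K
        rw [hco] at this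
        linear_combination -this
      rw [this]
  -- get factorization f - g = z^K u
  obtain ⟨u, hu, hu0, huev⟩ := ((hf.sub hg).analyticOrderAt_eq_natCast (n := K)).mp horder1
  have hu0' : 0 < ‖u 0‖ := norm_pos_iff.mpr hu0
  have hucont : ∀ᶠ z in 𝓝 (0:ℂ), dist (u z) (u 0) < ‖u 0‖ / 2 :=
    hu.continuousAt (Metric.ball_mem_nhds (u 0) (by positivity))
  have hbound1 : ∀ᶠ z in 𝓝 (0:ℂ),
      ‖u 0‖ / 2 * ‖z‖ ^ K ≤ ‖f z - g z‖ ∧ ‖f z - g z‖ ≤ 3 * ‖u 0‖ / 2 * ‖z‖ ^ K := by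
    filter_upwards [huev, hucont] with z heq hcl
    rw [dist_eq_norm] at hcl
    have hnu1 : ‖u z‖ ≤ 3 * ‖u 0‖ / 2 := by
      have := norm_sub_norm_le (u z) (u 0); linarith
    have hnu2 : ‖u 0‖ / 2 ≤ ‖u z‖ := by
      have := norm_sub_norm_le (u 0) (u z); rw [norm_sub_rev] at hcl; linarith
    have hnorm : ‖f z - g z‖ = ‖z‖ ^ K * ‖u z‖ := by
      have : f z - g z = (z - 0) ^ K • u z := heq
      rw [this, norm_smul, norm_pow, sub_zero]
    constructor
    · rw [hnorm, mul_comm (‖u 0‖ / 2)]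
      exact mul_le_mul_of_nonneg_left hnu2 (by positivity)
    · rw [hnorm, mul_comm (3 * ‖u 0‖ / 2)]
      exact mul_le_mul_of_nonneg_left hnu1 (by positivity)
  -- derivative of finv at 0 is nonzero
  have hdfinv : DifferentiableAt ℂ finv 0 := hfinv.differentiableAt
  obtain ⟨d, hd⟩ : ∃ d, HasDerivAt finv d 0 := ⟨_, hdfinv.hasDerivAt⟩
  have hd_def : deriv finv 0 = d := hd.deriv
  have hcomp : deriv (f ∘ finv) 0 = deriv f 0 * d := by
    have h1 : DifferentiableAt ℂ f (finv 0) := by rw [hfinv0]; exact hf.differentiableAt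
    rw [deriv_comp 0 h1 hdfinv, hfinv0, hd_def]
  have hone : deriv (f ∘ finv) 0 = 1 := by
    have heq : (f ∘ finv) =ᶠ[𝓝 (0:ℂ)] id := hfr
    rw [heq.deriv_eq, deriv_id]
  have hdne : d ≠ 0 := by
    intro h0
    rw [h0, mul_zero] at hcomp
    rw [hcomp] at hone
    exact zero_ne_one hone
  have hD : 0 < ‖d‖ := norm_pos_iff.mpr hdne
  -- bounds on finv
  have hflo := (hasDerivAt_iff_isLittleO.mp hd).bound (half_pos hD)
  have hfinvb : ∀ᶠ w in 𝓝 (0:ℂ), ‖d‖ / 2 * ‖w‖ ≤ ‖finv w‖ ∧ ‖finv w‖ ≤ 3 * ‖d‖ / 2 * ‖w‖ := by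
    filter_upwards [hflo] with w hw
    rw [hfinv0, sub_zero, sub_zero] at hw
    have h1 : ‖w • d‖ = ‖d‖ * ‖w‖ := by rw [norm_smul, mul_comm]
    have h2 := (abs_le.mp (le_trans (abs_norm_sub_norm_le (finv w) (w • d)) hw))
    constructor <;> nlinarith [h1, h2.1, h2.2, hw]
  -- strict derivative bound for g
  set e := deriv g 0 with he_def
  have hE : 0 < ‖e‖ := norm_pos_iff.mpr hg'
  have hsg : HasStrictDerivAt g e 0 := hg.contDiffAt.hasStrictDerivAt (n := 1) one_ne_zero
  have hglo := hsg.isLittleO.bound (half_pos hE)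
  have hgpair : ∀ᶠ pr : ℂ × ℂ in 𝓝 ((0:ℂ), (0:ℂ)),
      ‖e‖ / 2 * ‖pr.1 - pr.2‖ ≤ ‖g pr.1 - g pr.2‖ ∧
        ‖g pr.1 - g pr.2‖ ≤ 3 * ‖e‖ / 2 * ‖pr.1 - pr.2‖ := by
    filter_upwards [hglo] with pr hw
    have h1 : ‖(pr.1 - pr.2) • e‖ = ‖e‖ * ‖pr.1 - pr.2‖ := by rw [norm_smul, mul_comm]
    have h2 := (abs_le.mp (le_trans (abs_norm_sub_norm_le (g pr.1 - g pr.2) ((pr.1 - pr.2) • e)) hw))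
    constructor <;> nlinarith [h1, h2.1, h2.2, hw]
  -- tendsto facts
  have htf : Tendsto finv (𝓝 0) (𝓝 (0:ℂ)) := by
    have := hfinv.continuousAt; rwa [ContinuousAt, hfinv0] at this
  have htg : Tendsto ginv (𝓝 0) (𝓝 (0:ℂ)) := by
    have := hginv.continuousAt; rwa [ContinuousAt, hginv0] at this
  have htp : Tendsto (fun w => (ginv w, finv w)) (𝓝 0) (𝓝 ((0:ℂ), (0:ℂ))) :=
    htg.prodMk_nhds htf
  -- final bounds for finv - ginv
  set c : ℝ := ‖u 0‖ / 2 * ((‖d‖ / 2) ^ K) * (2 / (3 * ‖e‖)) with hc_def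
  set C : ℝ := 3 * ‖u 0‖ / 2 * ((3 * ‖d‖ / 2) ^ K) * (2 / ‖e‖) with hC_def
  have hcpos : 0 < c := by positivity
  have hbound2 : ∀ᶠ w in 𝓝 (0:ℂ),
      c * ‖w‖ ^ K ≤ ‖(finv - ginv) w‖ ∧ ‖(finv - ginv) w‖ ≤ C * ‖w‖ ^ K := by
    filter_upwards [htp.eventually hgpair, htf.eventually hbound1, hfinvb, hfr, hgr]
      with w hpair hb1 hfb hfrw hgrw
    simp only [Pi.sub_apply]
    have hkey : g (ginv w) - g (finv w) = f (finv w) - g (finv w) := by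
      rw [hgrw, hfrw]
    rw [hkey] at hpair
    have hΔ : ‖ginv w - finv w‖ = ‖finv w - ginv w‖ := norm_sub_rev _ _
    rw [hΔ] at hpair
    obtain ⟨hp1, hp2⟩ := hpair
    obtain ⟨hb1l, hb1u⟩ := hb1
    obtain ⟨hfl, hfu⟩ := hfb
    have hwn : (0:ℝ) ≤ ‖w‖ := norm_nonneg w
    have hfn : (0:ℝ) ≤ ‖finv w‖ := norm_nonneg _
    -- power bounds
    have hpowl : (‖d‖ / 2) ^ K * ‖w‖ ^ K ≤ ‖finv w‖ ^ K := by
      rw [← mul_pow]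
      exact pow_le_pow_left₀ (by positivity) (by rw [div_mul_eq_mul_div] at hfl ⊢; linarith) K
    have hpowu : ‖finv w‖ ^ K ≤ (3 * ‖d‖ / 2) ^ K * ‖w‖ ^ K := by
      rw [← mul_pow]
      exact pow_le_pow_left₀ hfn (by linarith) K
    constructor
    · -- lower bound
      have h1 : ‖u 0‖ / 2 * ((‖d‖ / 2) ^ K * ‖w‖ ^ K) ≤ ‖f (finv w) - g (finv w)‖ := by
        calc ‖u 0‖ / 2 * ((‖d‖ / 2) ^ K * ‖w‖ ^ K) ≤ ‖u 0‖ / 2 * ‖finv w‖ ^ K :=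
              mul_le_mul_of_nonneg_left hpowl (by positivity)
          _ ≤ ‖f (finv w) - g (finv w)‖ := hb1l
      calc c * ‖w‖ ^ K
          = (‖u 0‖ / 2 * ((‖d‖ / 2) ^ K * ‖w‖ ^ K)) * (2 / (3 * ‖e‖)) := by
            rw [hc_def]; ring
        _ ≤ ‖f (finv w) - g (finv w)‖ * (2 / (3 * ‖e‖)) :=
            mul_le_mul_of_nonneg_right h1 (by positivity)
        _ ≤ (3 * ‖e‖ / 2 * ‖finv w - ginv w‖) * (2 / (3 * ‖e‖)) :=
            mul_le_mul_of_nonneg_right hp2 (by positivity)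
        _ = ‖finv w - ginv w‖ := by
            have hEne : ‖e‖ ≠ 0 := ne_of_gt hE
            field_simp
    · -- upper bound
      have h1 : ‖f (finv w) - g (finv w)‖ ≤ 3 * ‖u 0‖ / 2 * ((3 * ‖d‖ / 2) ^ K * ‖w‖ ^ K) := by
        calc ‖f (finv w) - g (finv w)‖ ≤ 3 * ‖u 0‖ / 2 * ‖finv w‖ ^ K := hb1u
          _ ≤ 3 * ‖u 0‖ / 2 * ((3 * ‖d‖ / 2) ^ K * ‖w‖ ^ K) :=
              mul_le_mul_of_nonneg_left hpowu (by positivity)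
      calc ‖finv w - ginv w‖
          = (‖e‖ / 2 * ‖finv w - ginv w‖) * (2 / ‖e‖) := by
            have hEne : ‖e‖ ≠ 0 := ne_of_gt hE
            field_simp
        _ ≤ ‖f (finv w) - g (finv w)‖ * (2 / ‖e‖) :=
            mul_le_mul_of_nonneg_right hp1 (by positivity)
        _ ≤ (3 * ‖u 0‖ / 2 * ((3 * ‖d‖ / 2) ^ K * ‖w‖ ^ K)) * (2 / ‖e‖) :=
            mul_le_mul_of_nonneg_right h1 (by positivity)
        _ = C * ‖w‖ ^ K := by
            have hEne : ‖e‖ ≠ 0 := ne_of_gt hE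
            rw [hC_def]; field_simp
  -- conclude: order of finv - ginv is K
  have horder2 : analyticOrderAt (finv - ginv) 0 = (K : ℕ∞) :=
    order_eq_of_bounds' (hfinv.sub hginv) K hcpos hbound2
  obtain ⟨pf, hpf⟩ := id hfinv
  obtain ⟨pg, hpg⟩ := id hginv
  have hpfg : HasFPowerSeriesAt (finv - ginv) (pf - pg) 0 := hpf.sub hpg
  rw [order_eq_iff_coeff' (hfinv.sub hginv) hpfg K] at horder2
  obtain ⟨hz, hnz⟩ := horder2
  have hsubc2 : ∀ n, (pf - pg).coeff n = pf.coeff n - pg.coeff n := fun n => rfl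
  constructor
  · intro heq
    apply hnz
    rw [hsubc2]
    have h1 := iteratedDeriv_eq_coeff' hpf K
    have h2 := iteratedDeriv_eq_coeff' hpg K
    rw [h1, h2] at heq
    have h4 : pf.coeff K = pg.coeff K :=
      mul_left_cancel₀ (by exact_mod_cast Nat.factorial_ne_zero K) heq
    rw [h4, sub_self]
  · intro j hj0 hjK
    have h0 := hz j hjK
    rw [hsubc2] at h0
    have h4 : pf.coeff j = pg.coeff j := by linear_combination h0
    rw [iteratedDeriv_eq_coeff' hpf j, iteratedDeriv_eq_coeff' hpg j, h4]
end
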